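/- Let (V, <) be a finite strict partial order such that V, viewed as a forest (where the parent of v is the minimum of the linearly ordered set {w | v < w} when nonempty), assigns to each element at most one parent; i.e., for each v ∈ V the set {w ∈ V | v < w} is linearly ordered by <. Let Γ be a subset of V (the 'occurring' variables) of size at most N. If no element v ∉ Γ is a leaf (has no child), and no element v ∉ Γ has all of its children outside Γ, then |V| ≤ 2N. -/

import Mathlib

/-- `w` is a child of `v` in the strict order `lt`: `w < v` with nothing strictly between. -/
def IsChild {V : Type} (lt : V → V → Prop) (w v : V) : Prop :=
  lt w v ∧ ¬ ∃ u, lt w u ∧ lt u v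

/-- Lemma 5.2: in a finite "constraint" `(V, <)` (a strict partial order in which the
strict upper set of every element is linearly ordered), if `Γ ⊆ V` has at most `N`
elements, no element outside `Γ` is a leaf, and every element outside `Γ` has some
child in `Γ`, then `|V| ≤ 2N`. -/
theorem constraint_size_bound {V : Type} [Fintype V] (lt : V → V → Prop)
    (hirr : ∀ v, ¬ lt v v)
    (htrans : ∀ a b c, lt a b → lt b c → lt a c)
    (hlin : ∀ v w₁ w₂, lt v w₁ → lt v w₂ → lt w₁ w₂ ∨ w₁ = w₂ ∨ lt w₂ w₁)
    (Γ : Finset V) (N : ℕ) (hΓ : Γ.card ≤ N)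
    (hleaf : ∀ v ∉ Γ, ∃ w, IsChild lt w v)
    (hchild : ∀ v ∉ Γ, ∃ w, IsChild lt w v ∧ w ∈ Γ) :
    Fintype.card V ≤ 2 * N := by
  classical
  -- choose for each v ∉ Γ a child in Γ
  have hkey : ∀ v ∈ Γᶜ, ∃ w ∈ Γ, IsChild lt w v := by
    intro v hv
    obtain ⟨w, hw, hwΓ⟩ := hchild v (Finset.mem_compl.mp hv)
    exact ⟨w, hwΓ, hw⟩
  choose f hfΓ hf using hkey
  -- a node has at most one parent
  have huniq : ∀ w v₁ v₂, IsChild lt w v₁ → IsChild lt w v₂ → v₁ = v₂ := by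
    intro w v₁ v₂ ⟨h1, h1'⟩ ⟨h2, h2'⟩
    rcases hlin w v₁ v₂ h1 h2 with h | h | h
    · exact absurd ⟨v₁, h1, h⟩ h2'
    · exact h
    · exact absurd ⟨v₂, h2, h⟩ h1'
  have hinj : ∀ v₁ (h₁ : v₁ ∈ Γᶜ) v₂ (h₂ : v₂ ∈ Γᶜ), f v₁ h₁ = f v₂ h₂ → v₁ = v₂ := by
    intro v₁ h₁ v₂ h₂ heq
    exact huniq (f v₁ h₁) v₁ v₂ (hf v₁ h₁) (heq ▸ hf v₂ h₂)
  have hcard : (Γᶜ : Finset V).card ≤ Γ.card :=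
    Finset.card_le_card_of_injOn (fun v => if h : v ∈ Γᶜ then f v h else v)
      (by intro v hv; have hv' : v ∈ Γᶜ := hv; simp only [hv', dif_pos, Finset.mem_coe]; exact hfΓ v hv')
      (by intro a ha b hb hab
          simp only [Finset.mem_coe] at ha hb
          simp only [ha, hb, dif_pos] at hab
          exact hinj a ha b hb hab)
  have := Finset.card_add_card_compl Γ
  omega
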